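/- Let ψ, ν ∈ Ψ and, for δ ∈ (0,1) and p ≥ 2, set R(δ, p, ψ) = inf{ δ^{2/(pβ+2)}·ψ(αp)^{pβ/(pβ+2)} : α, β > 1, 1/α + 1/β = 1 }. Assume lim_{δ → 0+} sup_{p ≥ 2} R(δ, p, ψ)/ν(p) = 0. Then every martingale (S_n, 𝓕_n) with sup_n ‖S_n‖_{G(ψ)} < ∞ converges almost surely to a random variable S, and lim_{n → ∞} ‖S_n − S‖_{G(ν)} = 0. -/

import Mathlib

open MeasureTheory Filter Set
open scoped ENNReal Topology

/-- `ψ` belongs to the class `Ψ`: `p ↦ p·log ψ(p)` is continuous, convex, increasing,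
tends to `+∞`, and `ψ(p) → ∞` as `p → ∞`; `ψ` is positive on `[2,∞)`. -/
structure PsiClass (ψ : ℝ → ℝ) : Prop where
  pos : ∀ p : ℝ, 2 ≤ p → 0 < ψ p
  cont : ContinuousOn (fun p => p * Real.log (ψ p)) (Set.Ici 2)
  convex : ConvexOn ℝ (Set.Ici 2) (fun p => p * Real.log (ψ p))
  mono : MonotoneOn (fun p => p * Real.log (ψ p)) (Set.Ici 2)
  tendsto_top : Filter.Tendsto (fun p => p * Real.log (ψ p)) Filter.atTop Filter.atTop
  psi_tendsto_top : Filter.Tendsto ψ Filter.atTop Filter.atTop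

/-- The norm `‖η‖_{G(ψ)} = sup_{p ≥ 2} |η|_p / ψ(p)` (valued in `ℝ≥0∞`). -/
noncomputable def Gnorm {Ω : Type*} [MeasurableSpace Ω] (μ : Measure Ω)
    (ψ : ℝ → ℝ) (η : Ω → ℝ) : ℝ≥0∞ :=
  ⨆ p : {p : ℝ // 2 ≤ p}, eLpNorm η (ENNReal.ofReal (p : ℝ)) μ / ENNReal.ofReal (ψ (p : ℝ))

/-- `R(δ,p,ψ) = inf { δ^{2/(pβ+2)} · ψ(αp)^{pβ/(pβ+2)} : α, β > 1, 1/α + 1/β = 1 }`. -/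
noncomputable def Rfun (ψ : ℝ → ℝ) (δ p : ℝ) : ℝ :=
  sInf {r | ∃ α β : ℝ, 1 < α ∧ 1 < β ∧ 1/α + 1/β = 1 ∧
    r = δ ^ (2/(p*β + 2)) * (ψ (α*p)) ^ (p*β/(p*β + 2))}

lemma Rfun_nonneg {ψ : ℝ → ℝ} (hψ : PsiClass ψ) {δ p : ℝ} (hδ : 0 ≤ δ) (hp : 2 ≤ p) :
    0 ≤ Rfun ψ δ p := by
  apply Real.sInf_nonneg
  rintro r ⟨α, β, hα, hβ, hab, rfl⟩
  have hαp : 2 ≤ α * p := by nlinarith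
  exact mul_nonneg (Real.rpow_nonneg hδ _) (Real.rpow_nonneg (hψ.pos _ hαp).le _)

lemma interp_lemma {Ω : Type*} [MeasurableSpace Ω] (μ : Measure Ω) [IsProbabilityMeasure μ]
    {η : Ω → ℝ} (hη : AEStronglyMeasurable η μ) {p α β : ℝ} (hp : 2 ≤ p)
    (hα : 1 < α) (hβ : 1 < β) (hab : 1/α + 1/β = 1) :
    eLpNorm η (ENNReal.ofReal p) μ ≤
      eLpNorm η 2 μ ^ (2/(p*β)) * eLpNorm η (ENNReal.ofReal (α*p)) μ ^ (1 - 2/(p*β)) := by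
  have hp0 : 0 < p := by linarith
  have hβ0 : 0 < β := by linarith
  have hα0 : 0 < α := by linarith
  have hpβ : 2 < p * β := by nlinarith
  have hd0 : 0 < p - 2/β := by
    have : 2/β < 2 := by rw [div_lt_iff₀ hβ0]; nlinarith
    linarith
  set q : ℝ := α * (p - 2/β) with hq_def
  have hq0 : 0 < q := by positivity
  have hqle : q ≤ α * p := by
    have : 0 < 2/β := by positivity
    nlinarith
  set e : Ω → ℝ≥0∞ := fun ω => (‖η ω‖₊ : ℝ≥0∞) with he_def
  have he : AEMeasurable e μ := hη.enorm
  have hconj : Real.HolderConjugate β α := Real.holderConjugate_iff.mpr ⟨hβ, by rw [inv_eq_one_div, inv_eq_one_div]; linarith⟩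
  have hold : (∫⁻ ω, e ω ^ p ∂μ) ≤
      (∫⁻ ω, e ω ^ (2:ℝ) ∂μ) ^ (1/β) * (∫⁻ ω, e ω ^ q ∂μ) ^ (1/α) := by
    have h1 : ∀ ω, e ω ^ p = ((fun ω => e ω ^ (2/β)) * (fun ω => e ω ^ (p - 2/β))) ω := by
      intro ω
      show e ω ^ p = e ω ^ (2/β) * e ω ^ (p - 2/β)
      rw [← ENNReal.rpow_add_of_nonneg (x := e ω) (2/β) (p - 2/β) (by positivity) hd0.le]
      congr 1; ring
    calc (∫⁻ ω, e ω ^ p ∂μ)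
        = ∫⁻ ω, ((fun ω => e ω ^ (2/β)) * (fun ω => e ω ^ (p - 2/β))) ω ∂μ :=
          lintegral_congr h1
      _ ≤ (∫⁻ ω, ((fun ω => e ω ^ (2/β)) ω) ^ β ∂μ) ^ (1/β) *
          (∫⁻ ω, ((fun ω => e ω ^ (p - 2/β)) ω) ^ α ∂μ) ^ (1/α) :=
            ENNReal.lintegral_mul_le_Lp_mul_Lq μ hconj
              (he.pow aemeasurable_const) (he.pow aemeasurable_const)
      _ = (∫⁻ ω, e ω ^ (2:ℝ) ∂μ) ^ (1/β) * (∫⁻ ω, e ω ^ q ∂μ) ^ (1/α) := by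
            have c1 : ∀ ω, ((fun ω => e ω ^ (2/β)) ω) ^ β = e ω ^ (2:ℝ) := by
              intro ω; show (e ω ^ (2/β)) ^ β = e ω ^ (2:ℝ)
              rw [← ENNReal.rpow_mul]; congr 1; field_simp
            have c2 : ∀ ω, ((fun ω => e ω ^ (p - 2/β)) ω) ^ α = e ω ^ q := by
              intro ω; show (e ω ^ (p - 2/β)) ^ α = e ω ^ q
              rw [← ENNReal.rpow_mul]; congr 1; rw [hq_def]; ring
            rw [lintegral_congr c1, lintegral_congr c2]
  have hne_p : ENNReal.ofReal p ≠ 0 := by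
    simp only [ne_eq, ENNReal.ofReal_eq_zero, not_le]; exact hp0
  have hne_q : ENNReal.ofReal q ≠ 0 := by
    simp only [ne_eq, ENNReal.ofReal_eq_zero, not_le]; exact hq0
  have hE_p : eLpNorm η (ENNReal.ofReal p) μ = (∫⁻ ω, e ω ^ p ∂μ) ^ (1/p) := by
    rw [eLpNorm_eq_lintegral_rpow_enorm_toReal hne_p ENNReal.ofReal_ne_top,
      ENNReal.toReal_ofReal hp0.le]
    rfl
  have hE_2 : (∫⁻ ω, e ω ^ (2:ℝ) ∂μ) = eLpNorm η 2 μ ^ (2:ℝ) := by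
    rw [eLpNorm_eq_lintegral_rpow_enorm_toReal two_ne_zero ENNReal.ofNat_ne_top, ← ENNReal.rpow_mul]
    norm_num
    rfl
  have hE_q : (∫⁻ ω, e ω ^ q ∂μ) = eLpNorm η (ENNReal.ofReal q) μ ^ q := by
    rw [eLpNorm_eq_lintegral_rpow_enorm_toReal hne_q ENNReal.ofReal_ne_top,
      ENNReal.toReal_ofReal hq0.le, ← ENNReal.rpow_mul]
    rw [one_div, inv_mul_cancel₀ hq0.ne', ENNReal.rpow_one]
    rfl
  set A := eLpNorm η 2 μ
  set Bq := eLpNorm η (ENNReal.ofReal q) μ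
  have hAe : ((A ^ (2:ℝ)) ^ (1/β)) ^ (1/p) = A ^ (2/(p*β)) := by
    rw [← ENNReal.rpow_mul, ← ENNReal.rpow_mul]
    congr 1; field_simp
  have hBe : ((Bq ^ q) ^ (1/α)) ^ (1/p) = Bq ^ (1 - 2/(p*β)) := by
    rw [← ENNReal.rpow_mul, ← ENNReal.rpow_mul]
    congr 1; rw [hq_def]; field_simp
  calc eLpNorm η (ENNReal.ofReal p) μ = (∫⁻ ω, e ω ^ p ∂μ) ^ (1/p) := hE_p
    _ ≤ ((A ^ (2:ℝ)) ^ (1/β) * (Bq ^ q) ^ (1/α)) ^ (1/p) := by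
        rw [← hE_2, ← hE_q]; exact ENNReal.rpow_le_rpow hold (by positivity)
    _ = A ^ (2/(p*β)) * Bq ^ (1 - 2/(p*β)) := by
        rw [ENNReal.mul_rpow_of_nonneg _ _ (by positivity), hAe, hBe]
    _ ≤ A ^ (2/(p*β)) * eLpNorm η (ENNReal.ofReal (α*p)) μ ^ (1 - 2/(p*β)) := by
        refine mul_le_mul_right (ENNReal.rpow_le_rpow ?_ ?_) _
        · exact eLpNorm_le_eLpNorm_of_exponent_le (ENNReal.ofReal_le_ofReal hqle) hη
        · have : 2/(p*β) ≤ 1 := by rw [div_le_one (by positivity)]; linarith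
          linarith

set_option maxHeartbeats 1000000 in
lemma Rbound_lemma {ψ : ℝ → ℝ} (hψ : PsiClass ψ) {C δ p x : ℝ} (hC : 1 ≤ C)
    (hδ0 : 0 ≤ δ) (hδ1 : δ ≤ 1) (hp : 2 ≤ p) (hx : 0 ≤ x)
    (hb : ∀ α β : ℝ, 1 < α → 1 < β → 1/α + 1/β = 1 →
      x ≤ δ ^ (2/(p*β)) * (C * ψ (α*p)) ^ (1 - 2/(p*β))) :
    x ≤ (C * Real.exp (2*|Real.log (ψ 2)|)) * Rfun ψ δ p := by
  have hE1 : (1:ℝ) ≤ Real.exp (2*|Real.log (ψ 2)|) := by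
    rw [← Real.exp_zero]
    exact Real.exp_le_exp.mpr (by positivity)
  have hK1 : 1 ≤ C * Real.exp (2*|Real.log (ψ 2)|) := by nlinarith
  have hK0 : 0 < C * Real.exp (2*|Real.log (ψ 2)|) := by linarith
  have hRnn : 0 ≤ Rfun ψ δ p := Rfun_nonneg hψ hδ0 hp
  rcases eq_or_lt_of_le hδ0 with rfl | hδpos
  · -- δ = 0 case
    have h0 : x ≤ 0 := by
      have hb2 := hb 2 2 one_lt_two one_lt_two (by norm_num)
      rw [Real.zero_rpow (by positivity : (0:ℝ) < 2/(p*2)).ne', zero_mul] at hb2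
      exact hb2
    nlinarith
  · -- δ > 0
    rw [← div_le_iff₀' hK0]
    unfold Rfun
    apply le_csInf
    · exact ⟨_, 2, 2, one_lt_two, one_lt_two, by norm_num, rfl⟩
    rintro r ⟨α, β, hα, hβ, hab, rfl⟩
    rw [div_le_iff₀' hK0]
    have hα0 : 0 < α := by linarith
    have hβ0 : 0 < β := by linarith
    have hp0 : 0 < p := by linarith
    have hpβ : 2 ≤ p * β := by nlinarith
    have hαp2 : 2 ≤ α * p := by nlinarith
    have hψαp : 0 < ψ (α*p) := hψ.pos _ hαp2
    have hψ2 : 0 < ψ 2 := hψ.pos 2 le_rfl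
    have hd0 : 0 < 4/((p*β)*(p*β+2)) := by positivity
    -- step (i)
    have h_i : δ ^ (2/(p*β)) ≤ δ ^ (2/(p*β+2)) := by
      apply Real.rpow_le_rpow_of_exponent_ge hδpos hδ1
      apply div_le_div_of_nonneg_left (by norm_num) (by positivity) (by linarith)
    have hexp01 : 0 ≤ 1 - 2/(p*β) := by
      have : 2/(p*β) ≤ 1 := by rw [div_le_one (by positivity)]; linarith
      linarith
    -- step (ii)
    have h_ii : (C * ψ (α*p)) ^ (1 - 2/(p*β)) ≤ C * ψ (α*p) ^ (1 - 2/(p*β)) := by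
      rw [Real.mul_rpow (by linarith) hψαp.le]
      have hCe : C ^ (1 - 2/(p*β)) ≤ C := by
        calc C ^ (1 - 2/(p*β)) ≤ C ^ (1:ℝ) := by
              apply Real.rpow_le_rpow_of_exponent_le hC
              have : 0 ≤ 2/(p*β) := by positivity
              linarith
          _ = C := Real.rpow_one C
      exact mul_le_mul_of_nonneg_right hCe (Real.rpow_nonneg hψαp.le _)
    -- step (iii)
    have h_iii : ψ (α*p) ^ (1 - 2/(p*β)) ≤
        Real.exp (2*|Real.log (ψ 2)|) * ψ (α*p) ^ (p*β/(p*β+2)) := by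
      have hsplit : 1 - 2/(p*β) = p*β/(p*β+2) + (-(4/((p*β)*(p*β+2)))) := by
        field_simp; ring
      rw [hsplit, Real.rpow_add hψαp, mul_comm]
      apply mul_le_mul_of_nonneg_right _ (Real.rpow_nonneg hψαp.le _)
      rw [Real.rpow_def_of_pos hψαp]
      apply Real.exp_le_exp.mpr
      have hmono : 2 * Real.log (ψ 2) ≤ (α*p) * Real.log (ψ (α*p)) := by
        have := hψ.mono (by simp : (2:ℝ) ∈ Set.Ici 2)
          (by exact hαp2 : (α*p) ∈ Set.Ici 2) hαp2
        simpa using this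
      have hdle : 4/((p*β)*(p*β+2)) ≤ α * p := by
        have h1 : 4/((p*β)*(p*β+2)) ≤ 1/2 := by
          rw [div_le_div_iff₀ (by positivity) (by norm_num)]
          nlinarith
        nlinarith
      have habs : -(2*|Real.log (ψ 2)|) ≤ 2 * Real.log (ψ 2) := by
        nlinarith [neg_abs_le (Real.log (ψ 2))]
      rcases le_or_gt 0 (Real.log (ψ (α*p))) with hu | hu
      · nlinarith [abs_nonneg (Real.log (ψ 2))]
      · nlinarith
    -- combine
    have hfirst := hb α β hα hβ hab
    have hA : 0 ≤ δ ^ (2/(p*β+2)) := Real.rpow_nonneg hδ0 _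
    have hstep2 : (C * ψ (α*p)) ^ (1 - 2/(p*β)) ≤
        C * (Real.exp (2*|Real.log (ψ 2)|) * ψ (α*p) ^ (p*β/(p*β+2))) :=
      le_trans h_ii (mul_le_mul_of_nonneg_left h_iii (by linarith))
    have hchain : x ≤ δ ^ (2/(p*β+2)) *
        (C * (Real.exp (2*|Real.log (ψ 2)|) * ψ (α*p) ^ (p*β/(p*β+2)))) :=
      le_trans hfirst (mul_le_mul h_i hstep2
        (Real.rpow_nonneg (mul_nonneg (by linarith) hψαp.le) _) hA)
    calc x ≤ δ ^ (2/(p*β+2)) *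
          (C * (Real.exp (2*|Real.log (ψ 2)|) * ψ (α*p) ^ (p*β/(p*β+2)))) := hchain
      _ = C * Real.exp (2*|Real.log (ψ 2)|) *
          (δ ^ (2/(p*β+2)) * ψ (α*p) ^ (p*β/(p*β+2))) := by ring

lemma eLpNorm_two_sq {Ω : Type*} [MeasurableSpace Ω] (μ : Measure Ω)
    {f : Ω → ℝ} (hf : MemLp f 2 μ) :
    eLpNorm f 2 μ ^ (2:ℝ) = ENNReal.ofReal (∫ ω, f ω ^ 2 ∂μ) := by
  rw [eLpNorm_eq_lintegral_rpow_enorm_toReal two_ne_zero ENNReal.ofNat_ne_top,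
    ← ENNReal.rpow_mul]
  have h2 : (ENNReal.toReal 2) = (2:ℝ) := by simp
  rw [h2]
  norm_num
  rw [ofReal_integral_eq_lintegral_ofReal hf.integrable_sq
    (Filter.Eventually.of_forall fun ω => sq_nonneg _)]
  refine lintegral_congr fun ω => ?_
  rw [Real.enorm_eq_ofReal_abs, ← ENNReal.ofReal_pow (abs_nonneg _), sq_abs]

set_option maxHeartbeats 1600000 in
theorem stmt12 {Ω : Type*} [m0 : MeasurableSpace Ω] (μ : Measure Ω) [IsProbabilityMeasure μ]
    (ψ ν : ℝ → ℝ) (hψ : PsiClass ψ) (hν : PsiClass ν)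
    (hR : Filter.Tendsto
      (fun δ : ℝ => ⨆ p : {p : ℝ // 2 ≤ p}, ENNReal.ofReal (Rfun ψ δ (p : ℝ) / ν (p : ℝ)))
      (𝓝[>] (0:ℝ)) (𝓝 0))
    (ℱ : Filtration ℕ m0) (S : ℕ → Ω → ℝ) (hmart : Martingale S ℱ μ)
    (hbdd : (⨆ n : ℕ, Gnorm μ ψ (S n)) < ⊤) :
    ∃ Slim : Ω → ℝ,
      (∀ᵐ ω ∂μ, Filter.Tendsto (fun n => S n ω) Filter.atTop (𝓝 (Slim ω))) ∧
      Filter.Tendsto (fun n => Gnorm μ ν (fun ω => S n ω - Slim ω)) Filter.atTop (𝓝 0) := by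
  classical
  set C₀ : ℝ≥0∞ := ⨆ n : ℕ, Gnorm μ ψ (S n) with hC₀_def
  have hC₀_ne : C₀ ≠ ⊤ := hbdd.ne
  have hSm : ∀ n, AEStronglyMeasurable (S n) μ :=
    fun n => ((hmart.stronglyAdapted n).mono (ℱ.le n)).aestronglyMeasurable
  have h2eq : ENNReal.ofReal (2:ℝ) = (2:ℝ≥0∞) := by norm_num
  -- uniform bound on eLpNorms of S n
  have h1 : ∀ n, ∀ p : ℝ, 2 ≤ p →
      eLpNorm (S n) (ENNReal.ofReal p) μ ≤ C₀ * ENNReal.ofReal (ψ p) := by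
    intro n p hp
    have hterm : eLpNorm (S n) (ENNReal.ofReal p) μ / ENNReal.ofReal (ψ p) ≤ C₀ :=
      le_trans (le_iSup (fun q : {q : ℝ // 2 ≤ q} =>
        eLpNorm (S n) (ENNReal.ofReal (q:ℝ)) μ / ENNReal.ofReal (ψ (q:ℝ))) ⟨p, hp⟩)
        (le_iSup (fun n => Gnorm μ ψ (S n)) n)
    have hψp : ENNReal.ofReal (ψ p) ≠ 0 := by
      simp only [ne_eq, ENNReal.ofReal_eq_zero, not_le]
      exact hψ.pos p hp
    rw [ENNReal.div_le_iff hψp ENNReal.ofReal_ne_top] at hterm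
    exact hterm
  -- L¹ boundedness
  have hB : ∀ n, eLpNorm (S n) 2 μ ≤ C₀ * ENNReal.ofReal (ψ 2) := by
    intro n
    have := h1 n 2 le_rfl
    rwa [h2eq] at this
  have hBne : C₀ * ENNReal.ofReal (ψ 2) ≠ ⊤ :=
    ENNReal.mul_ne_top hC₀_ne ENNReal.ofReal_ne_top
  have hL1 : ∀ n, eLpNorm (S n) 1 μ ≤ (C₀ * ENNReal.ofReal (ψ 2)).toNNReal := by
    intro n
    refine le_trans (eLpNorm_le_eLpNorm_of_exponent_le (p := 1) (q := 2) (by norm_num) (hSm n)) ?_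
    rw [ENNReal.coe_toNNReal hBne]
    exact hB n
  set Slim : Ω → ℝ := ℱ.limitProcess S μ with hSlim_def
  have hae : ∀ᵐ ω ∂μ, Tendsto (fun n => S n ω) atTop (𝓝 (Slim ω)) :=
    hmart.submartingale.ae_tendsto_limitProcess hL1
  refine ⟨Slim, hae, ?_⟩
  have hSlim_m : AEStronglyMeasurable Slim μ :=
    (Filtration.stronglyMeasurable_limitProcess.mono (iSup_le fun n => ℱ.le n)).aestronglyMeasurable
  -- Fatou bound on Slim
  have h2 : ∀ p : ℝ, 2 ≤ p → eLpNorm Slim (ENNReal.ofReal p) μ ≤ C₀ * ENNReal.ofReal (ψ p) := by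
    intro p hp
    refine le_trans (Lp.eLpNorm_lim_le_liminf_eLpNorm hSm Slim hae) ?_
    exact Filter.liminf_le_of_frequently_le
      (Filter.Frequently.of_forall fun n => h1 n p hp)
  -- bound on differences
  set Creal : ℝ := max 1 ((2 * C₀).toReal) with hCreal_def
  have hCreal1 : 1 ≤ Creal := le_max_left _ _
  have h2C : 2 * C₀ ≤ ENNReal.ofReal Creal := by
    rw [← ENNReal.ofReal_toReal (ENNReal.mul_ne_top ENNReal.ofNat_ne_top hC₀_ne)]
    exact ENNReal.ofReal_le_ofReal (le_max_right _ _)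
  set η : ℕ → Ω → ℝ := fun n => fun ω => S n ω - Slim ω with hη_def
  have hηm : ∀ n, AEStronglyMeasurable (η n) μ := fun n => (hSm n).sub hSlim_m
  have hM : ∀ n, ∀ p : ℝ, 2 ≤ p →
      eLpNorm (η n) (ENNReal.ofReal p) μ ≤ ENNReal.ofReal (Creal * ψ p) := by
    intro n p hp
    have hsub : eLpNorm (η n) (ENNReal.ofReal p) μ ≤
        eLpNorm (S n) (ENNReal.ofReal p) μ + eLpNorm Slim (ENNReal.ofReal p) μ := by
      have h1p : (1:ℝ≥0∞) ≤ ENNReal.ofReal p := by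
        rw [← ENNReal.ofReal_one]
        exact ENNReal.ofReal_le_ofReal (by linarith)
      exact eLpNorm_sub_le (hSm n) hSlim_m h1p
    calc eLpNorm (η n) (ENNReal.ofReal p) μ
        ≤ eLpNorm (S n) (ENNReal.ofReal p) μ + eLpNorm Slim (ENNReal.ofReal p) μ := hsub
      _ ≤ C₀ * ENNReal.ofReal (ψ p) + C₀ * ENNReal.ofReal (ψ p) :=
          add_le_add (h1 n p hp) (h2 p hp)
      _ = 2 * C₀ * ENNReal.ofReal (ψ p) := by ring
      _ ≤ ENNReal.ofReal Creal * ENNReal.ofReal (ψ p) :=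
          mul_le_mul_left h2C _
      _ = ENNReal.ofReal (Creal * ψ p) :=
          (ENNReal.ofReal_mul (by linarith)).symm
  -- L² structure
  have hSL2 : ∀ n, MemLp (S n) 2 μ := fun n => ⟨hSm n, lt_of_le_of_lt (hB n) hBne.lt_top⟩
  have hint_mul : ∀ n m, Integrable (fun ω => S n ω * S m ω) μ := by
    intro n m
    have h := (hSL2 m).smul (φ := S n) (r := 1) (hSL2 n)
      (hpqr := ⟨by rw [ENNReal.inv_two_add_inv_two]; simp⟩)
    exact memLp_one_iff_integrable.mp h
  set a : ℕ → ℝ := fun n => ∫ ω, (S n ω)^2 ∂μ with ha_def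
  have horth : ∀ n m, n ≤ m → ∫ ω, S n ω * S m ω ∂μ = a n := by
    intro n m hnm
    haveI : SigmaFinite (μ.trim (ℱ.le n)) := by infer_instance
    have hcond : μ[S n * S m | ℱ n] =ᵐ[μ] S n * μ[S m | ℱ n] :=
      condExp_mul_of_stronglyMeasurable_left (hmart.stronglyAdapted n) (hint_mul n m) (hmart.integrable m)
    have heq2 : S n * μ[S m | ℱ n] =ᵐ[μ] S n * S n :=
      Filter.EventuallyEq.mul (Filter.EventuallyEq.refl _ _) (hmart.condExp_ae_eq hnm)
    calc ∫ ω, S n ω * S m ω ∂μ = ∫ ω, (S n * S m) ω ∂μ := rfl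
      _ = ∫ ω, (μ[S n * S m | ℱ n]) ω ∂μ := (integral_condExp (ℱ.le n)).symm
      _ = ∫ ω, (S n * S n) ω ∂μ := integral_congr_ae (hcond.trans heq2)
      _ = a n := by
          refine integral_congr_ae (Filter.Eventually.of_forall fun ω => ?_)
          simp [pow_two]
  have hdiffint : ∀ n m, n ≤ m → ∫ ω, (S m ω - S n ω)^2 ∂μ = a m - a n := by
    intro n m hnm
    have hsq_m : Integrable (fun ω => S m ω ^ 2) μ := (hSL2 m).integrable_sq
    have hsq_n : Integrable (fun ω => S n ω ^ 2) μ := (hSL2 n).integrable_sq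
    have hmul := hint_mul n m
    have hexpand : ∀ ω, (S m ω - S n ω)^2 =
        (S m ω ^ 2 - 2 * (S n ω * S m ω)) + S n ω ^ 2 := by intro ω; ring
    have hmul2 : Integrable (fun ω => 2 * (S n ω * S m ω)) μ := hmul.const_mul 2
    have hI1 : Integrable (fun ω => S m ω ^ 2 - 2 * (S n ω * S m ω)) μ := hsq_m.sub hmul2
    rw [integral_congr_ae (Filter.Eventually.of_forall hexpand),
      integral_add hI1 hsq_n, integral_sub hsq_m hmul2, integral_const_mul, horth n m hnm]
    have e1 : ∫ ω, S m ω ^ 2 ∂μ = a m := rfl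
    have e2 : ∫ ω, S n ω ^ 2 ∂μ = a n := rfl
    rw [e1, e2]
    ring
  have ha_nonneg : ∀ m n, n ≤ m → 0 ≤ a m - a n := by
    intro m n h
    rw [← hdiffint n m h]
    exact integral_nonneg fun ω => sq_nonneg _
  have hmono_a : Monotone a := fun n m h => by nlinarith [ha_nonneg m n h]
  have hbdd_a : ∀ n, a n ≤ ((C₀ * ENNReal.ofReal (ψ 2)).toReal) ^ (2:ℝ) := by
    intro n
    have hsq := eLpNorm_two_sq μ (hSL2 n)
    have hle : ENNReal.ofReal (a n) ≤ (C₀ * ENNReal.ofReal (ψ 2)) ^ (2:ℝ) := by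
      rw [← hsq]
      exact ENNReal.rpow_le_rpow (hB n) (by norm_num)
    have ha0 : 0 ≤ a n := integral_nonneg fun ω => sq_nonneg _
    calc a n = (ENNReal.ofReal (a n)).toReal := (ENNReal.toReal_ofReal ha0).symm
      _ ≤ ((C₀ * ENNReal.ofReal (ψ 2)) ^ (2:ℝ)).toReal :=
          ENNReal.toReal_mono (ENNReal.rpow_ne_top_of_nonneg (by norm_num) hBne) hle
      _ = ((C₀ * ENNReal.ofReal (ψ 2)).toReal) ^ (2:ℝ) := (ENNReal.toReal_rpow _ _).symm
  -- monotone bounded => converges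
  set L : ℝ := ⨆ n, a n with hL_def
  have hbdda : BddAbove (Set.range a) := by
    refine ⟨((C₀ * ENNReal.ofReal (ψ 2)).toReal) ^ (2:ℝ), ?_⟩
    rintro _ ⟨n, rfl⟩
    exact hbdd_a n
  have haL : Tendsto a atTop (𝓝 L) := tendsto_atTop_ciSup hmono_a hbdda
  have haleL : ∀ n, a n ≤ L := fun n => le_ciSup hbdda n
  -- L² distance to the limit
  set δn : ℕ → ℝ := fun n => (eLpNorm (η n) 2 μ).toReal with hδn_def
  have hfin2 : ∀ n, eLpNorm (η n) 2 μ ≠ ⊤ := by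
    intro n
    have := hM n 2 le_rfl
    rw [h2eq] at this
    exact (lt_of_le_of_lt this ENNReal.ofReal_lt_top).ne
  have hδbound : ∀ n, eLpNorm (η n) 2 μ ≤ ENNReal.ofReal (Real.sqrt (L - a n)) := by
    intro n
    have hg_meas : ∀ m : ℕ, AEStronglyMeasurable (fun ω => S n ω - S m ω) μ :=
      fun m => (hSm n).sub (hSm m)
    have hg_tend : ∀ᵐ ω ∂μ, Tendsto (fun m => S n ω - S m ω) atTop (𝓝 (η n ω)) := by
      filter_upwards [hae] with ω hω
      exact tendsto_const_nhds.sub hω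
    refine le_trans (Lp.eLpNorm_lim_le_liminf_eLpNorm hg_meas (η n) hg_tend) ?_
    apply Filter.liminf_le_of_frequently_le _ (by
      exact ⟨0, Filter.eventually_map.mpr (Filter.Eventually.of_forall fun _ => zero_le)⟩)
    rw [Filter.frequently_atTop]
    intro m0'
    refine ⟨max m0' n, le_max_left _ _, ?_⟩
    set m := max m0' n
    have hnm : n ≤ m := le_max_right _ _
    have hmem : MemLp (fun ω => S n ω - S m ω) 2 μ := (hSL2 n).sub (hSL2 m)
    have hsq := eLpNorm_two_sq μ hmem
    have hieq : ∫ ω, (S n ω - S m ω)^2 ∂μ = a m - a n := by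
      rw [← hdiffint n m hnm]
      refine integral_congr_ae (Filter.Eventually.of_forall fun ω => ?_)
      ring
    rw [hieq] at hsq
    have hXle : eLpNorm (fun ω => S n ω - S m ω) 2 μ ^ (2:ℝ) ≤ ENNReal.ofReal (L - a n) := by
      rw [hsq]
      exact ENNReal.ofReal_le_ofReal (by linarith [haleL m])
    have h1' : eLpNorm (fun ω => S n ω - S m ω) 2 μ =
        (eLpNorm (fun ω => S n ω - S m ω) 2 μ ^ (2:ℝ)) ^ ((2:ℝ)⁻¹) := by
      rw [← ENNReal.rpow_mul]
      norm_num
    rw [h1']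
    calc (eLpNorm (fun ω => S n ω - S m ω) 2 μ ^ (2:ℝ)) ^ ((2:ℝ)⁻¹)
        ≤ (ENNReal.ofReal (L - a n)) ^ ((2:ℝ)⁻¹) :=
          ENNReal.rpow_le_rpow hXle (by norm_num)
      _ = ENNReal.ofReal ((L - a n) ^ ((2:ℝ)⁻¹)) :=
          ENNReal.ofReal_rpow_of_nonneg (by linarith [haleL n]) (by norm_num)
      _ = ENNReal.ofReal (Real.sqrt (L - a n)) := by
          rw [Real.sqrt_eq_rpow]
          norm_num
  have hδn_le : ∀ n, δn n ≤ Real.sqrt (L - a n) := fun n =>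
    ENNReal.toReal_le_of_le_ofReal (Real.sqrt_nonneg _) (hδbound n)
  have hδ_tend : Tendsto δn atTop (𝓝 0) := by
    have hsub : Tendsto (fun n => L - a n) atTop (𝓝 0) := by
      have := tendsto_const_nhds (x := L) (f := atTop (α := ℕ)) |>.sub haL
      simpa using this
    have hsqrt : Tendsto (fun n => Real.sqrt (L - a n)) atTop (𝓝 0) := by
      have := (Real.continuous_sqrt.tendsto' 0 0 Real.sqrt_zero).comp hsub
      exact this
    exact squeeze_zero (fun n => ENNReal.toReal_nonneg) hδn_le hsqrt
  -- the constant K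
  set Kc : ℝ := Creal * Real.exp (2*|Real.log (ψ 2)|) with hKc_def
  have hKc1 : 1 ≤ Kc := by
    have h1' : (1:ℝ) ≤ Real.exp (2*|Real.log (ψ 2)|) := by
      rw [← Real.exp_zero]
      exact Real.exp_le_exp.mpr (by positivity)
    nlinarith
  have hKc0 : 0 < Kc := by linarith
  have hKne0 : ENNReal.ofReal Kc ≠ 0 := by
    simp only [ne_eq, ENNReal.ofReal_eq_zero, not_le]; exact hKc0
  -- the main per-n bound
  set F : ℝ → ℝ≥0∞ := fun δ => ⨆ p : {p : ℝ // 2 ≤ p},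
    ENNReal.ofReal (Rfun ψ δ (p:ℝ) / ν (p:ℝ)) with hF_def
  have hGb : ∀ n, δn n ≤ 1 → Gnorm μ ν (η n) ≤ ENNReal.ofReal Kc * F (δn n) := by
    intro n hδ1
    have hδ0 : 0 ≤ δn n := ENNReal.toReal_nonneg
    unfold Gnorm
    apply iSup_le
    rintro ⟨p, hp⟩
    simp only
    have hfinp : eLpNorm (η n) (ENNReal.ofReal p) μ ≠ ⊤ :=
      (lt_of_le_of_lt (hM n p hp) ENNReal.ofReal_lt_top).ne
    set x : ℝ := (eLpNorm (η n) (ENNReal.ofReal p) μ).toReal with hx_def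
    have hb : ∀ α β : ℝ, 1 < α → 1 < β → 1/α + 1/β = 1 →
        x ≤ (δn n) ^ (2/(p*β)) * (Creal * ψ (α*p)) ^ (1 - 2/(p*β)) := by
      intro α β hα hβ hab
      have hαp2 : 2 ≤ α * p := by nlinarith
      have he1 : 0 ≤ 2/(p*β) := by positivity
      have he2 : 0 ≤ 1 - 2/(p*β) := by
        have hpβ : 2 ≤ p * β := by nlinarith
        have : 2/(p*β) ≤ 1 := by
          rw [div_le_one (by positivity)]
          linarith
        linarith
      have hi := interp_lemma μ (hηm n) hp hα hβ hab
      have hD : eLpNorm (η n) 2 μ = ENNReal.ofReal (δn n) :=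
        (ENNReal.ofReal_toReal (hfin2 n)).symm
      have hMb : eLpNorm (η n) (ENNReal.ofReal (α*p)) μ ≤ ENNReal.ofReal (Creal * ψ (α*p)) :=
        hM n (α*p) hαp2
      have hchain : eLpNorm (η n) (ENNReal.ofReal p) μ ≤
          ENNReal.ofReal ((δn n) ^ (2/(p*β)) * (Creal * ψ (α*p)) ^ (1 - 2/(p*β))) := by
        calc eLpNorm (η n) (ENNReal.ofReal p) μ
            ≤ eLpNorm (η n) 2 μ ^ (2/(p*β)) *
              eLpNorm (η n) (ENNReal.ofReal (α*p)) μ ^ (1 - 2/(p*β)) := hi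
          _ ≤ ENNReal.ofReal (δn n) ^ (2/(p*β)) *
              ENNReal.ofReal (Creal * ψ (α*p)) ^ (1 - 2/(p*β)) := by
              rw [hD]
              exact mul_le_mul_right (ENNReal.rpow_le_rpow hMb he2) _
          _ = ENNReal.ofReal ((δn n) ^ (2/(p*β)) * (Creal * ψ (α*p)) ^ (1 - 2/(p*β))) := by
              rw [ENNReal.ofReal_rpow_of_nonneg hδ0 he1,
                ENNReal.ofReal_rpow_of_nonneg (by nlinarith [hψ.pos (α*p) hαp2]) he2,
                ← ENNReal.ofReal_mul (Real.rpow_nonneg hδ0 _)]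
      exact ENNReal.toReal_le_of_le_ofReal
        (mul_nonneg (Real.rpow_nonneg hδ0 _)
          (Real.rpow_nonneg (by nlinarith [hψ.pos (α*p) hαp2]) _)) hchain
    have hxR : x ≤ Kc * Rfun ψ (δn n) p :=
      Rbound_lemma hψ hCreal1 hδ0 hδ1 hp ENNReal.toReal_nonneg hb
    calc eLpNorm (η n) (ENNReal.ofReal p) μ / ENNReal.ofReal (ν p)
        ≤ ENNReal.ofReal (Kc * Rfun ψ (δn n) p) / ENNReal.ofReal (ν p) := by
          apply ENNReal.div_le_div_right
          rw [← ENNReal.ofReal_toReal hfinp]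
          exact ENNReal.ofReal_le_ofReal hxR
      _ = ENNReal.ofReal (Kc * Rfun ψ (δn n) p / ν p) := by
          rw [ENNReal.ofReal_div_of_pos (hν.pos p hp)]
      _ = ENNReal.ofReal (Kc * (Rfun ψ (δn n) p / ν p)) := by
          rw [mul_div_assoc]
      _ = ENNReal.ofReal Kc * ENNReal.ofReal (Rfun ψ (δn n) p / ν p) := by
          rw [ENNReal.ofReal_mul (by linarith)]
      _ ≤ ENNReal.ofReal Kc * F (δn n) := by
          apply mul_le_mul_right
          exact le_iSup (fun q : {q : ℝ // 2 ≤ q} =>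
            ENNReal.ofReal (Rfun ψ (δn n) (q:ℝ) / ν (q:ℝ))) ⟨p, hp⟩
  -- conclude
  rw [ENNReal.tendsto_nhds_zero]
  intro ε hε
  have hε' : 0 < ε / ENNReal.ofReal Kc := ENNReal.div_pos hε.ne' ENNReal.ofReal_ne_top
  have hev : ∀ᶠ δ in 𝓝[>] (0:ℝ), F δ ≤ ε / ENNReal.ofReal Kc :=
    (ENNReal.tendsto_nhds_zero.mp hR) _ hε'
  rw [eventually_nhdsWithin_iff, Metric.eventually_nhds_iff] at hev
  obtain ⟨t, ht0, ht⟩ := hev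
  have hevn : ∀ᶠ n in atTop, δn n < min t 1 :=
    hδ_tend.eventually_lt_const (by positivity)
  filter_upwards [hevn] with n hn
  rcases eq_or_lt_of_le (ENNReal.toReal_nonneg : 0 ≤ δn n) with h0 | h0
  · -- δn n = 0
    have hzero : eLpNorm (η n) 2 μ = 0 := by
      have := (ENNReal.toReal_eq_zero_iff _).mp h0.symm
      exact this.resolve_right (hfin2 n)
    have hae0 : η n =ᵐ[μ] 0 := (eLpNorm_eq_zero_iff (hηm n) two_ne_zero).mp hzero
    have hG0 : Gnorm μ ν (η n) ≤ 0 := by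
      unfold Gnorm
      apply iSup_le
      rintro ⟨p, hp⟩
      simp only
      rw [eLpNorm_congr_ae hae0, eLpNorm_zero, ENNReal.zero_div]
    exact le_trans hG0 zero_le
  · have hle1 : δn n ≤ 1 := le_of_lt (lt_of_lt_of_le hn (min_le_right t 1))
    have hdist : dist (δn n) 0 < t := by
      rw [Real.dist_eq, sub_zero, abs_of_nonneg ENNReal.toReal_nonneg]
      exact lt_of_lt_of_le hn (min_le_left t 1)
    have hFδ : F (δn n) ≤ ε / ENNReal.ofReal Kc := ht hdist h0
    calc Gnorm μ ν (η n) ≤ ENNReal.ofReal Kc * F (δn n) := hGb n hle1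
      _ ≤ ENNReal.ofReal Kc * (ε / ENNReal.ofReal Kc) := mul_le_mul_right hFδ _
      _ = ε / ENNReal.ofReal Kc * ENNReal.ofReal Kc := mul_comm _ _
      _ = ε := ENNReal.div_mul_cancel hKne0 ENNReal.ofReal_ne_top
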